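/- Let K ⊆ ℝ^n be an n-dimensional compact convex body containing the origin in its interior, with barycenter b_K ≠ 0. Let x_K be the intersection point of the ray b_K − ℝ_{≥0}·b_K with the boundary of K, and let R(K) := |x_K|/|x_K − b_K|. Then K' := R(K)·(K − b_K) is contained in K. -/

import Mathlib

open MeasureTheory

/-- Let `K` be an `n`-dimensional compact convex body with `0 ∈ int K` and barycenter
`b ≠ 0`. If `xK` is the intersection of the ray `b − ℝ₊·b` with `∂K` and
`R(K) = |xK|/|xK − b|`, then `R(K)·(K − b) ⊆ K`. -/
theorem scaled_translate_subset (n : ℕ) (hn : 1 ≤ n)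
    (K : Set (Fin n → ℝ))
    (hconv : Convex ℝ K) (hcomp : IsCompact K)
    (h0 : (0 : Fin n → ℝ) ∈ interior K)
    (b : Fin n → ℝ) (hb : b = (volume K).toReal⁻¹ • ∫ x in K, x) (hbne : b ≠ 0)
    (xK : Fin n → ℝ) (hxK : xK ∈ frontier K)
    (hray : ∃ t : ℝ, 0 ≤ t ∧ xK = b - t • b)
    (r : ℝ) (hr : r = ‖xK‖ / ‖xK - b‖) :
    (fun x => r • (x - b)) '' K ⊆ K := by
  obtain ⟨t, ht0, hxKt⟩ := hray
  have hKclosed : IsClosed K := hcomp.isClosed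
  have h0K : (0 : Fin n → ℝ) ∈ K := interior_subset h0
  have hxKK : xK ∈ K := by
    rw [hKclosed.frontier_eq] at hxK; exact hxK.1
  have hxKnotint : xK ∉ interior K := by
    rw [hKclosed.frontier_eq] at hxK; exact hxK.2
  -- volume K ≠ 0
  have hvol : volume K ≠ 0 := by
    intro h
    exact (isOpen_interior.measure_ne_zero volume ⟨0, h0⟩)
      (measure_mono_null interior_subset h)
  have hvolt : volume K ≠ ⊤ := hcomp.measure_ne_top
  -- barycenter is in K
  have hbK : b ∈ K := by
    have hint : IntegrableOn (fun x : Fin n → ℝ => x) K volume :=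
      continuous_id.continuousOn.integrableOn_compact hcomp
    have := hconv.set_average_mem hKclosed hvol hvolt
      ((ae_restrict_mem hcomp.measurableSet).mono fun x hx => hx) hint
    rwa [setAverage_eq, measureReal_def, ← hb] at this
  -- rewrite xK as (1 - t) • b
  have hxKb : xK = (1 - t) • b := by rw [hxKt, sub_smul, one_smul]
  -- t is not in (0, 1]
  have ht1 : t = 0 ∨ 1 < t := by
    rcases eq_or_lt_of_le ht0 with h | h
    · exact Or.inl h.symm
    rcases lt_trichotomy t 1 with h1 | h1 | h1
    · exfalso
      apply hxKnotint
      have := hconv.combo_interior_closure_mem_interior h0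
        (subset_closure hbK) h (by linarith : (0:ℝ) ≤ 1 - t) (by ring)
      rwa [smul_zero, zero_add, ← hxKb] at this
    · exfalso
      apply hxKnotint
      rw [hxKb, h1, sub_self, zero_smul]
      exact h0
    · exact Or.inr h1
  rcases ht1 with rfl | ht1
  · -- t = 0 : xK = b, r = ‖b‖/0 = 0
    have : xK - b = 0 := by rw [hxKt, zero_smul, sub_zero, sub_self]
    have hr0 : r = 0 := by rw [hr, this, norm_zero, div_zero]
    rintro y ⟨x, hx, rfl⟩
    simpa [hr0] using h0K
  · -- 1 < t : r = (t-1)/t ∈ [0,1)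
    have hbnorm : (0 : ℝ) < ‖b‖ := norm_pos_iff.mpr hbne
    have hrval : r = (t - 1) / t := by
      have h1 : xK - b = -(t • b) := by rw [hxKt]; abel
      rw [hr, h1, norm_neg, hxKb, norm_smul, norm_smul, Real.norm_eq_abs, Real.norm_eq_abs,
        abs_of_nonneg ht0, abs_of_nonpos (by linarith : 1 - t ≤ 0)]
      rw [neg_sub, mul_div_mul_right _ _ (ne_of_gt hbnorm)]
    have htpos : (0 : ℝ) < t := by linarith
    have hr0 : 0 ≤ r := by
      rw [hrval]; apply div_nonneg <;> linarith
    have hr1 : r ≤ 1 := by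
      rw [hrval, div_le_one htpos]; linarith
    rintro y ⟨x, hx, rfl⟩
    have hc : (1 - r) * (1 - t) = -r := by
      rw [hrval]; field_simp; ring
    have key : r • (x - b) = (1 - r) • xK + r • x := by
      rw [hxKb, smul_smul, hc]; module
    show r • (x - b) ∈ K
    rw [key]
    exact hconv hxKK hx (by linarith) hr0 (by ring)
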